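/- Let ρ(t) = (sin t, 0, …, 0, cos t) in ℝ^{2m+1} parameterize a great circle through the north pole of S^{2m}, and let φ(t,p) = p·Rot(a₁t, …, a_mt) be the block-rotation flow with 0 < a₁ < 1. Then 𝒫(t) = φ(t, ρ(t)) satisfies 𝒫(2πℓ) = (0,…,0,1) for all ℓ ∈ ℤ, with velocity 𝒫'(2πℓ) = (cos 2πℓa₁, sin 2πℓa₁, 0, …, 0). In particular 𝒫'(2πℓ) = 𝒫'(0) if and only if ℓa₁ ∈ ℤ; since 0 < a₁ < 1, 𝒫'(2π) ≠ 𝒫'(0), so 𝒫 self-intersects at the north pole without closing at t = 2π. -/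

import Mathlib

/-- The Katok geodesic `P(t) = (sin t cos a₁t, sin t sin a₁t, 0, …, 0, cos t)`
through the north pole of `S^{2m}`: it returns to the pole at `t = 2πℓ` with
velocity `(cos 2πℓa₁, sin 2πℓa₁, 0, …, 0)`; it self-intersects without closing
at `t = 2π` since `0 < a₁ < 1`. -/
theorem stmt10 (m : ℕ) (hm : 1 ≤ m) (a₁ : ℝ) (ha0 : 0 < a₁) (ha1 : a₁ < 1)
    (P : ℝ → Fin (2 * m + 1) → ℝ)
    (hP : ∀ t i, P t i =
      if (i : ℕ) = 0 then Real.sin t * Real.cos (a₁ * t)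
      else if (i : ℕ) = 1 then Real.sin t * Real.sin (a₁ * t)
      else if (i : ℕ) = 2 * m then Real.cos t else 0) :
    (∀ ℓ : ℤ, ∀ i, P (2 * Real.pi * ℓ) i = if (i : ℕ) = 2 * m then 1 else 0) ∧
    (∀ ℓ : ℤ, ∀ i, deriv (fun t => P t i) (2 * Real.pi * ℓ) =
      if (i : ℕ) = 0 then Real.cos (2 * Real.pi * ℓ * a₁)
      else if (i : ℕ) = 1 then Real.sin (2 * Real.pi * ℓ * a₁) else 0) ∧
    (∀ ℓ : ℤ,
      (∀ i, deriv (fun t => P t i) (2 * Real.pi * ℓ) = deriv (fun t => P t i) 0)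
        ↔ ∃ k : ℤ, (ℓ : ℝ) * a₁ = k) ∧
    (∃ i, deriv (fun t => P t i) (2 * Real.pi) ≠ deriv (fun t => P t i) 0) := by
  have hs : ∀ ℓ : ℤ, Real.sin (2 * Real.pi * ℓ) = 0 := by
    intro ℓ
    rw [show (2 * Real.pi * ℓ : ℝ) = ((2 * ℓ : ℤ) : ℝ) * Real.pi by push_cast; ring]
    exact Real.sin_int_mul_pi (2 * ℓ)
  have hc : ∀ ℓ : ℤ, Real.cos (2 * Real.pi * ℓ) = 1 := by
    intro ℓ
    rw [show (2 * Real.pi * ℓ : ℝ) = ℓ * (2 * Real.pi) by ring]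
    exact Real.cos_int_mul_two_pi ℓ
  have hm0 : ¬ m = 0 := by omega
  have hne01 : ∀ i : Fin (2 * m + 1), (i : ℕ) = 0 → ¬ ((i : ℕ) = 2 * m) := by
    intro i h0 h2; omega
  have hne12 : ∀ i : Fin (2 * m + 1), (i : ℕ) = 1 → ¬ ((i : ℕ) = 2 * m) := by
    intro i h1 h2; omega
  -- general derivative formula
  have key : ∀ (x : ℝ) (i : Fin (2 * m + 1)), deriv (fun t => P t i) x =
      if (i : ℕ) = 0 then
        Real.cos x * Real.cos (a₁ * x) - a₁ * Real.sin x * Real.sin (a₁ * x)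
      else if (i : ℕ) = 1 then
        Real.cos x * Real.sin (a₁ * x) + a₁ * Real.sin x * Real.cos (a₁ * x)
      else if (i : ℕ) = 2 * m then -Real.sin x else 0 := by
    intro x i
    have h1 : HasDerivAt (fun t : ℝ => a₁ * t) a₁ x := by
      simpa using (hasDerivAt_id x).const_mul a₁
    by_cases h0 : (i : ℕ) = 0
    · have hfun : (fun t => P t i) = fun t => Real.sin t * Real.cos (a₁ * t) := by
        funext t; simp [hP t i, h0]
      have h2 : HasDerivAt (fun t => Real.cos (a₁ * t)) (-Real.sin (a₁ * x) * a₁) x :=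
        (Real.hasDerivAt_cos (a₁ * x)).comp x h1
      have h3 : deriv (fun t => Real.sin t * Real.cos (a₁ * t)) x = _ :=
        ((Real.hasDerivAt_sin x).mul h2).deriv
      rw [hfun, h3]
      simp [hm0, h0]; ring
    · by_cases h1' : (i : ℕ) = 1
      · have hfun : (fun t => P t i) = fun t => Real.sin t * Real.sin (a₁ * t) := by
          funext t; simp [hP t i, h0, h1']
        have h2 : HasDerivAt (fun t => Real.sin (a₁ * t)) (Real.cos (a₁ * x) * a₁) x :=
          (Real.hasDerivAt_sin (a₁ * x)).comp x h1
        have h3 : deriv (fun t => Real.sin t * Real.sin (a₁ * t)) x = _ :=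
          ((Real.hasDerivAt_sin x).mul h2).deriv
        rw [hfun, h3]
        simp [hm0, h0, h1']; ring
      · by_cases h2' : (i : ℕ) = 2 * m
        · have hfun : (fun t => P t i) = fun t => Real.cos t := by
            funext t; simp [hm0, hP t i, h0, h1', h2']
          rw [hfun, Real.deriv_cos]
          simp [hm0, h0, h1', h2']
        · have hfun : (fun t => P t i) = fun _ => (0 : ℝ) := by
            funext t; simp [hm0, hP t i, h0, h1', h2']
          rw [hfun, deriv_const]
          simp [hm0, h0, h1', h2']
  have part1 : ∀ ℓ : ℤ, ∀ i, P (2 * Real.pi * ℓ) i =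
      if (i : ℕ) = 2 * m then 1 else 0 := by
    intro ℓ i
    rw [hP]
    by_cases h0 : (i : ℕ) = 0
    · rw [if_pos h0, if_neg (show ¬ (i:ℕ) = 2*m by omega), hs ℓ, zero_mul]
    · by_cases h1' : (i : ℕ) = 1
      · rw [if_neg h0, if_pos h1', if_neg (show ¬ (i:ℕ) = 2*m by omega), hs ℓ, zero_mul]
      · by_cases h2' : (i : ℕ) = 2 * m
        · rw [if_neg h0, if_neg h1', if_pos h2', if_pos h2', hc ℓ]
        · rw [if_neg h0, if_neg h1', if_neg h2', if_neg h2']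
  have part2 : ∀ ℓ : ℤ, ∀ i, deriv (fun t => P t i) (2 * Real.pi * ℓ) =
      if (i : ℕ) = 0 then Real.cos (2 * Real.pi * ℓ * a₁)
      else if (i : ℕ) = 1 then Real.sin (2 * Real.pi * ℓ * a₁) else 0 := by
    intro ℓ i
    rw [key]
    by_cases h0 : (i : ℕ) = 0
    · simp [hm0, h0, hs ℓ, hc ℓ]
      ring_nf
    · by_cases h1' : (i : ℕ) = 1
      · simp [hm0, h0, h1', hs ℓ, hc ℓ]
        ring_nf
      · by_cases h2' : (i : ℕ) = 2 * m
        · simp [hm0, h0, h1', h2', hs ℓ]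
        · simp [hm0, h0, h1', h2']
  have d0 : ∀ i : Fin (2 * m + 1), deriv (fun t => P t i) 0 =
      if (i : ℕ) = 0 then 1 else 0 := by
    intro i
    have := part2 0 i
    simp only [Int.cast_zero, mul_zero, zero_mul] at this
    rw [this]
    by_cases h0 : (i : ℕ) = 0 <;> by_cases h1' : (i : ℕ) = 1 <;>
      simp [hm0, h0, h1']
  refine ⟨part1, part2, ?_, ?_⟩
  · intro ℓ
    constructor
    · intro h
      set i0 : Fin (2 * m + 1) := ⟨0, by omega⟩ with hi0
      have h0 := h i0
      rw [part2, d0] at h0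
      have hi0' : ((i0 : ℕ) = 0) := rfl
      rw [if_pos hi0', if_pos hi0'] at h0
      obtain ⟨n, hn⟩ := (Real.cos_eq_one_iff _).mp h0
      refine ⟨n, ?_⟩
      have hpi := Real.pi_pos
      have : (n : ℝ) * (2 * Real.pi) = (ℓ : ℝ) * a₁ * (2 * Real.pi) := by
        rw [hn]; ring
      exact (mul_right_cancel₀ (by positivity) this).symm
    · rintro ⟨k, hk⟩
      intro i
      rw [part2, d0]
      have h2 : (2 * Real.pi * ℓ * a₁ : ℝ) = (k : ℝ) * (2 * Real.pi) := by
        rw [show (2 * Real.pi * ℓ * a₁ : ℝ) = (ℓ : ℝ) * a₁ * (2 * Real.pi) by ring, hk]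
      have hcos : Real.cos (2 * Real.pi * ℓ * a₁) = 1 := by
        rw [h2, Real.cos_int_mul_two_pi]
      have hsin : Real.sin (2 * Real.pi * ℓ * a₁) = 0 := by
        rw [h2, show ((k : ℝ) * (2 * Real.pi)) = ((2 * k : ℤ) : ℝ) * Real.pi by push_cast; ring]
        exact Real.sin_int_mul_pi (2 * k)
      by_cases h0 : (i : ℕ) = 0
      · simp [h0, hcos]
      · by_cases h1' : (i : ℕ) = 1
        · simp [h0, h1', hsin]
        · simp [hm0, h0, h1']
  · refine ⟨⟨0, by omega⟩, ?_⟩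
    have h1 := part2 1 ⟨0, by omega⟩
    simp only [Int.cast_one, mul_one] at h1
    rw [h1, d0]
    simp only [if_pos rfl]
    intro hcon
    obtain ⟨n, hn⟩ := (Real.cos_eq_one_iff _).mp hcon
    have hpi := Real.pi_pos
    have ha : a₁ = (n : ℝ) := by
      have : (n : ℝ) * (2 * Real.pi) = a₁ * (2 * Real.pi) := by rw [hn]; ring
      exact (mul_right_cancel₀ (by positivity) this).symm
    rw [ha] at ha0 ha1
    have : (0:ℤ) < n := by exact_mod_cast ha0
    have : (n:ℤ) < 1 := by exact_mod_cast ha1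
    omega
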